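/- Let R be a G-graded ring and I a homogeneous nilpotent ideal of R. Then R is graded strongly nil clean if and only if R/I is graded strongly nil clean. -/

import Mathlib

/-- A `G`-grading of a ring `R`: a family of additive subgroups `C g` with
`C g * C h ⊆ C (g*h)`, `1 ∈ C e`, and `R = ⊕_g C g` (internal direct sum). -/
structure Grading (G : Type*) [Group G] [DecidableEq G] (R : Type*) [Ring R] where
  C : G → AddSubgroup R
  one_mem : (1 : R) ∈ C 1
  mul_mem : ∀ {g h : G} {a b : R}, a ∈ C g → b ∈ C h → a * b ∈ C (g * h)
  isInternal : DirectSum.IsInternal C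

namespace Grading

variable {G : Type*} [Group G] [DecidableEq G] {R : Type*} [Ring R]

/-- An element is homogeneous if it lies in some component. -/
def Homogeneous (A : Grading G R) (a : R) : Prop := ∃ g, a ∈ A.C g

/-- A homogeneous element is graded nil clean if it is the sum of a homogeneous
idempotent and a homogeneous nilpotent. -/
def IsGradedNilClean (A : Grading G R) (a : R) : Prop :=
  ∃ f b : R, A.Homogeneous f ∧ IsIdempotentElem f ∧ A.Homogeneous b ∧
    IsNilpotent b ∧ a = f + b

/-- A graded ring is graded nil clean if every homogeneous element is. -/
def GradedNilClean (A : Grading G R) : Prop :=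
  ∀ a : R, A.Homogeneous a → A.IsGradedNilClean a

/-- Graded strongly nil clean element: the idempotent and nilpotent commute. -/
def IsGradedStronglyNilClean (A : Grading G R) (a : R) : Prop :=
  ∃ f b : R, A.Homogeneous f ∧ IsIdempotentElem f ∧ A.Homogeneous b ∧
    IsNilpotent b ∧ f * b = b * f ∧ a = f + b

def GradedStronglyNilClean (A : Grading G R) : Prop :=
  ∀ a : R, A.Homogeneous a → A.IsGradedStronglyNilClean a

end Grading

namespace Grading

variable {G : Type*} [Group G] [DecidableEq G] {R : Type*} [Ring R]

/-- A two-sided ideal, viewed as an additive subgroup. -/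
def tiAddSubgroup (I : TwoSidedIdeal R) : AddSubgroup R where
  carrier := I
  add_mem' := fun h1 h2 => I.add_mem h1 h2
  zero_mem' := I.zero_mem
  neg_mem' := fun h => I.neg_mem h

/-- A two-sided ideal is homogeneous if each of its elements lies in the sum of
the intersections `I ∩ R_g`, i.e. `I = ⊕_g (I ∩ R_g)`. -/
def HomogeneousTI (A : Grading G R) (I : TwoSidedIdeal R) : Prop :=
  ∀ a ∈ I, a ∈ ⨆ g : G, (A.C g ⊓ tiAddSubgroup I)

/-- The `g`-component of the quotient grading on `R/I`: the image of `R_g`. -/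
def quotC (A : Grading G R) (I : TwoSidedIdeal R) (g : G) :
    AddSubgroup I.ringCon.Quotient :=
  (A.C g).map (I.ringCon.mk' : R →+* I.ringCon.Quotient).toAddMonoidHom

/-- Homogeneous elements of the quotient graded ring `R/I`. -/
def QuotHomogeneous (A : Grading G R) (I : TwoSidedIdeal R)
    (a : I.ringCon.Quotient) : Prop :=
  ∃ g, a ∈ A.quotC I g

/-- The quotient graded ring `R/I` is graded nil clean. -/
def QuotGradedNilClean (A : Grading G R) (I : TwoSidedIdeal R) : Prop :=
  ∀ a : I.ringCon.Quotient, A.QuotHomogeneous I a →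
    ∃ f b : I.ringCon.Quotient, A.QuotHomogeneous I f ∧ IsIdempotentElem f ∧
      A.QuotHomogeneous I b ∧ IsNilpotent b ∧ a = f + b

/-- A quotient element is graded strongly nil clean. -/
def QuotIsGradedStronglyNilClean (A : Grading G R) (I : TwoSidedIdeal R)
    (a : I.ringCon.Quotient) : Prop :=
  ∃ f b : I.ringCon.Quotient, A.QuotHomogeneous I f ∧ IsIdempotentElem f ∧
    A.QuotHomogeneous I b ∧ IsNilpotent b ∧ f * b = b * f ∧ a = f + b

/-- The quotient graded ring `R/I` is graded strongly nil clean. -/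
def QuotGradedStronglyNilClean (A : Grading G R) (I : TwoSidedIdeal R) : Prop :=
  ∀ a : I.ringCon.Quotient, A.QuotHomogeneous I a →
    A.QuotIsGradedStronglyNilClean I a

/-- The ideal `I` is nilpotent: some power `I^n` vanishes, i.e. every product of
`n` elements of `I` is zero. -/
def NilpotentTI (I : TwoSidedIdeal R) : Prop :=
  ∃ n : ℕ, 0 < n ∧ ∀ x : Fin n → R, (∀ i, x i ∈ I) → (List.ofFn x).prod = 0

end Grading


/-! ### Auxiliary machinery -/

section MyAux

variable {G : Type*} [Group G] [DecidableEq G] {R : Type*} [Ring R]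

/-- The decomposition equivalence coming from an internal direct sum. -/
noncomputable def myDec (C : G → AddSubgroup R) (h : DirectSum.IsInternal C) :
    R ≃+ DirectSum G fun g => C g :=
  (AddEquiv.ofBijective (DirectSum.coeAddMonoidHom C) h).symm

/-- The projection onto the `p`-th component. -/
noncomputable def myProj (C : G → AddSubgroup R) (h : DirectSum.IsInternal C) (p : G) (x : R) :
    R :=
  (myDec C h x p : R)

lemma myProj_of_mem (C : G → AddSubgroup R) (h : DirectSum.IsInternal C) {p g : G} {x : R}
    (hx : x ∈ C g) : myProj C h p x = if p = g then x else 0 := by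
  have h1 : myDec C h x = DirectSum.of (fun g => C g) g ⟨x, hx⟩ := by
    unfold myDec
    rw [AddEquiv.symm_apply_eq]
    exact (DirectSum.coeAddMonoidHom_of C g ⟨x, hx⟩).symm
  unfold myProj
  rw [h1]
  split_ifs with hp
  · subst hp; rw [DirectSum.of_eq_same]
  · rw [DirectSum.of_eq_of_ne _ _ _ hp]; rfl

lemma myProj_add (C : G → AddSubgroup R) (h : DirectSum.IsInternal C) (p : G) (x y : R) :
    myProj C h p (x + y) = myProj C h p x + myProj C h p y := by
  unfold myProj; rw [map_add, DirectSum.add_apply]; rfl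

lemma myProj_zero (C : G → AddSubgroup R) (h : DirectSum.IsInternal C) (p : G) :
    myProj C h p 0 = 0 := by
  unfold myProj; rw [map_zero]; rfl

/-- Every homogeneous component of an element of a homogeneous ideal lies in the ideal. -/
lemma myProj_mem (A : Grading G R) (I : TwoSidedIdeal R) (hhom : A.HomogeneousTI I) {x : R}
    (hx : x ∈ I) (p : G) : myProj A.C A.isInternal p x ∈ I := by
  refine AddSubgroup.iSup_induction (x := x) (fun g => A.C g ⊓ Grading.tiAddSubgroup I)
    (hhom x hx) ?_ ?_ ?_
  · intro g y hy
    obtain ⟨hy1, hy2⟩ := AddSubgroup.mem_inf.mp hy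
    rw [myProj_of_mem _ _ hy1]
    split_ifs
    · exact hy2
    · exact I.zero_mem
  · rw [myProj_zero]; exact I.zero_mem
  · intro a b ha hb
    rw [myProj_add]; exact I.add_mem ha hb

lemma myKer (I : TwoSidedIdeal R) (x : R) : I.ringCon.mk' x = 0 ↔ x ∈ I := by
  rw [TwoSidedIdeal.mem_iff]
  exact RingCon.eq I.ringCon

/-- Extract the `g`-component from a three-term homogeneous sum lying in `I`. -/
lemma myMem3 (A : Grading G R) (I : TwoSidedIdeal R) (hhom : A.HomogeneousTI I)
    {a f b : R} {g h k : G} (ha : a ∈ A.C g) (hf : f ∈ A.C h) (hb : b ∈ A.C k)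
    (hz : a + f + b ∈ I) (hgh : g ≠ h) (hgk : g ≠ k) : a ∈ I := by
  have := myProj_mem A I hhom hz g
  rw [myProj_add, myProj_add, myProj_of_mem _ _ ha, myProj_of_mem _ _ hf,
    myProj_of_mem _ _ hb, if_pos rfl, if_neg hgh, if_neg hgk, add_zero, add_zero] at this
  exact this

lemma myMem2 (A : Grading G R) (I : TwoSidedIdeal R) (hhom : A.HomogeneousTI I)
    {a f : R} {g h : G} (ha : a ∈ A.C g) (hf : f ∈ A.C h)
    (hz : a + f ∈ I) (hgh : g ≠ h) : a ∈ I := by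
  have := myProj_mem A I hhom hz g
  rw [myProj_add, myProj_of_mem _ _ ha, myProj_of_mem _ _ hf,
    if_pos rfl, if_neg hgh, add_zero] at this
  exact this

/-- Elements of a nilpotent ideal are nilpotent, with a uniform exponent. -/
lemma myNilMem (I : TwoSidedIdeal R) {n : ℕ} (hI : ∀ x : Fin n → R, (∀ i, x i ∈ I) →
    (List.ofFn x).prod = 0) {x : R} (hx : x ∈ I) : x ^ n = 0 := by
  have := hI (fun _ => x) (fun _ => hx)
  rwa [List.ofFn_const, List.prod_replicate] at this

/-- Lifting idempotents: if `t*t - t` is nilpotent, there is an idempotent `e` which is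
"polynomial in `t`" in the sense recorded by the second and third conclusions, with
`t - e` nilpotent. -/
lemma myLift : ∀ (n : ℕ) (t : R), (t * t - t) ^ (n + 1) = 0 →
    ∃ e : R, e * e = e ∧
      (∀ S : AddSubgroup R, (∀ x ∈ S, ∀ y ∈ S, x * y ∈ S) → t ∈ S → e ∈ S) ∧
      (∀ x : R, x * t = t * x → x * e = e * x) ∧
      IsNilpotent (t - e) := by
  intro n
  induction n with
  | zero =>
    intro t ht
    rw [pow_one, sub_eq_zero] at ht
    exact ⟨t, ht, fun S _ hts => hts, fun x hx => hx, by simp⟩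
  | succ n ih =>
    intro t ht
    have hq : (t*t+t*t+t*t-t*t*t-t*t*t)*(t*t+t*t+t*t-t*t*t-t*t*t) - (t*t+t*t+t*t-t*t*t-t*t*t)
        = (t*t-t)*(t*t-t)*(4*(t*t)-4*t-3) := by noncomm_ring
    have hc1 : Commute ((t*t-t)*(t*t-t)) (4*(t*t)-4*t-3) := by
      show _ * _ = _ * _
      noncomm_ring
    have ht' : ((t*t+t*t+t*t-t*t*t-t*t*t)*(t*t+t*t+t*t-t*t*t-t*t*t)
        - (t*t+t*t+t*t-t*t*t-t*t*t)) ^ (n + 1) = 0 := by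
      rw [hq, hc1.mul_pow, (Commute.refl (t*t-t)).mul_pow]
      have h2 : (t*t-t)^(n+1) * (t*t-t)^(n+1) = (t*t-t)^(n+1+1) * (t*t-t)^n := by
        rw [← pow_add, ← pow_add]
        ring_nf
      rw [h2, ht, zero_mul, zero_mul]
    obtain ⟨e, he, hS, hcom, hnil⟩ := ih (t*t+t*t+t*t-t*t*t-t*t*t) ht'
    have ctt' : Commute t (t*t+t*t+t*t-t*t*t-t*t*t) := by
      show _ * _ = _ * _
      noncomm_ring
    have cte : t * e = e * t := hcom t ctt'
    refine ⟨e, he, ?_, ?_, ?_⟩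
    · intro S hSmul htS
      have h2 : t * t ∈ S := hSmul _ htS _ htS
      have h3 : t * t * t ∈ S := hSmul _ h2 _ htS
      exact hS S hSmul (sub_mem (sub_mem (add_mem (add_mem h2 h2) h2) h3) h3)
    · intro x hx
      apply hcom
      have c : Commute x t := hx
      exact ((((c.mul_right c).add_right (c.mul_right c)).add_right (c.mul_right c)).sub_right
        ((c.mul_right c).mul_right c)).sub_right ((c.mul_right c).mul_right c)
    · have h1 : IsNilpotent (t - (t*t+t*t+t*t-t*t*t-t*t*t)) := by
        have hid : t - (t*t+t*t+t*t-t*t*t-t*t*t) = (t+t-1) * (t*t-t) := by noncomm_ring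
        have hcd : Commute (t+t-1) (t*t-t) := by
          show _ * _ = _ * _
          noncomm_ring
        rw [hid]
        exact hcd.isNilpotent_mul_left ⟨n+1+1, ht⟩
      have cb : Commute t e := cte
      have cc : Commute (t*t+t*t+t*t-t*t*t-t*t*t) e := hcom _ rfl
      have c2 : Commute (t - (t*t+t*t+t*t-t*t*t-t*t*t)) ((t*t+t*t+t*t-t*t*t-t*t*t) - e) :=
        (ctt'.sub_left (Commute.refl _)).sub_right (cb.sub_left cc)
      have hsplit : t - e = (t - (t*t+t*t+t*t-t*t*t-t*t*t)) + ((t*t+t*t+t*t-t*t*t-t*t*t) - e) := by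
        abel
      rw [hsplit]
      exact c2.isNilpotent_add h1 hnil

end MyAux

/-- Let `I` be a homogeneous nilpotent two-sided ideal of a `G`-graded ring `R`.
Then `R` is graded strongly nil clean iff `R/I` is graded strongly nil clean. -/
theorem stmt10 {G : Type*} [Group G] [DecidableEq G] {R : Type*} [Ring R]
    (A : Grading G R) (I : TwoSidedIdeal R) (hhom : A.HomogeneousTI I)
    (hnilp : Grading.NilpotentTI I) :
    A.GradedStronglyNilClean ↔ A.QuotGradedStronglyNilClean I := by
  obtain ⟨n, hn, hIprod⟩ := hnilp
  set mk : R →+* I.ringCon.Quotient := I.ringCon.mk' with hmk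
  have hnilquot : ∀ x : R, IsNilpotent (mk x) → IsNilpotent x := by
    intro x ⟨m, hm⟩
    refine ⟨m * n, ?_⟩
    rw [pow_mul]
    apply myNilMem I hIprod
    rw [← myKer I, map_pow]
    exact hm
  constructor
  · -- forward direction
    intro hR x hx
    obtain ⟨g, hxg⟩ := hx
    obtain ⟨a, ha, rfl⟩ := AddSubgroup.mem_map.mp hxg
    obtain ⟨f, b, ⟨h, hf⟩, hid, ⟨k, hb⟩, ⟨m, hbm⟩, hcomm, rfl⟩ := hR a ⟨g, ha⟩
    refine ⟨mk f, mk b, ⟨h, AddSubgroup.mem_map.mpr ⟨f, hf, rfl⟩⟩, ?_,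
      ⟨k, AddSubgroup.mem_map.mpr ⟨b, hb, rfl⟩⟩, ⟨m, ?_⟩, ?_, ?_⟩
    · show mk f * mk f = mk f
      rw [← map_mul, hid]
    · rw [← map_pow, hbm, map_zero]
    · rw [← map_mul, ← map_mul, hcomm]
    · show mk (f + b) = mk f + mk b
      rw [map_add]
  · -- backward direction
    intro hQ a ⟨g, ha⟩
    have hmka : A.QuotHomogeneous I (mk a) := ⟨g, AddSubgroup.mem_map.mpr ⟨a, ha, rfl⟩⟩
    obtain ⟨fq, bq, ⟨h, hfq⟩, hfid, ⟨k, hbq⟩, hbnil, hcomm, heq⟩ := hQ (mk a) hmka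
    obtain ⟨f, hf, hfeq⟩ := AddSubgroup.mem_map.mp hfq
    obtain ⟨b', hb', hbeq⟩ := AddSubgroup.mem_map.mp hbq
    replace hfeq : mk f = fq := hfeq
    replace hbeq : mk b' = bq := hbeq
    by_cases hg : g = 1
    · -- degree 1: use that a*a - a is nilpotent
      subst hg
      have key : IsNilpotent (a * a - a) := by
        have hq1 : mk (a * a - a) = bq * (fq + fq + bq - 1) := by
          rw [map_sub, map_mul, heq]
          have expand : (fq + bq) * (fq + bq) - (fq + bq)
              = fq * fq - fq + (fq * bq - bq * fq) + bq * (fq + fq + bq - 1) := by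
            noncomm_ring
          rw [expand, hfid, sub_self, hcomm, sub_self, zero_add, zero_add]
        have hbc : Commute bq (fq + fq + bq - 1) := by
          show _ * _ = _ * _
          rw [mul_sub, sub_mul, mul_add, mul_add, add_mul, add_mul, hcomm, mul_one, one_mul]
        have hnq : IsNilpotent (mk (a * a - a)) := by
          rw [hq1]
          exact hbc.isNilpotent_mul_right hbnil
        exact hnilquot _ hnq
      obtain ⟨m, hm⟩ := key
      have hm' : (a * a - a) ^ (m + 1) = 0 := by rw [pow_succ, hm, zero_mul]
      obtain ⟨e, he, hS, hcom, hnil⟩ := myLift m a hm'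
      have heC1 : e ∈ A.C 1 := by
        refine hS (A.C 1) ?_ ha
        intro x hx y hy
        have := A.mul_mem hx hy
        rwa [one_mul] at this
      have hae : a * e = e * a := hcom a rfl
      refine ⟨e, a - e, ⟨1, heC1⟩, he, ⟨1, sub_mem ha heC1⟩, hnil, ?_, by abel⟩
      rw [mul_sub, sub_mul, he, hae]
    · -- degree ≠ 1: show a is nilpotent
      have hanil : IsNilpotent a := by
        apply hnilquot
        by_cases hf0 : mk f = 0
        · rw [heq, ← hfeq, hf0, zero_add]
          exact hbnil
        · -- f is nonzero mod I, hence its degree h is 1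
          have hffI : f * f + -f ∈ I := by
            rw [← myKer I, map_add, map_neg, map_mul, hfeq]
            rw [← sub_eq_add_neg, show fq * fq = fq from hfid, sub_self]
          have hh : h = 1 := by
            by_contra hne
            have hne2 : h * h ≠ h := fun c => hne (mul_left_cancel (c.trans (mul_one h).symm))
            have : -f ∈ I :=
              myMem2 A I hhom (neg_mem hf) (A.mul_mem hf hf)
                (by rwa [add_comm] at hffI) (fun c => hne2 c.symm)
            have : f ∈ I := by simpa using I.neg_mem this
            exact hf0 ((myKer I f).mpr this)
          subst hh
          have hzI : a + -f + -b' ∈ I := by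
            rw [← myKer I, map_add, map_add, map_neg, map_neg, hfeq, hbeq, heq]
            abel
          by_cases hkg : k = g
          · -- then f ∈ I, contradiction
            subst hkg
            exfalso
            have h1 : -f + (a + -b') ∈ I := by
              have : a + -f + -b' = -f + (a + -b') := by abel
              rwa [this] at hzI
            have h2 : -f ∈ I :=
              myMem2 A I hhom (neg_mem hf) (add_mem ha (neg_mem hb')) h1
                (fun c => hg c.symm)
            have : f ∈ I := by simpa using I.neg_mem h2
            exact hf0 ((myKer I f).mpr this)
          · -- a itself lies in I
            have haI : a ∈ I :=
              myMem3 A I hhom ha (neg_mem hf) (neg_mem hb') hzI hg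
                (fun c => hkg c.symm)
            rw [(myKer I a).mpr haI]
            exact ⟨1, by rw [pow_one]⟩
      refine ⟨0, a, ⟨1, (A.C 1).zero_mem⟩, ?_, ⟨g, ha⟩, hanil, by rw [zero_mul, mul_zero],
        by rw [zero_add]⟩
      show (0 : R) * 0 = 0
      rw [mul_zero]
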